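/- arXiv:2505.22196 — 2 statements merged into one kernel-verified Lean document; each statement's English description precedes it below -/
import Mathlib

section
/- Let f : 𝒳 → ℝ^d be an encoder with ‖f(x)‖ = 1 for all x ∈ 𝒳 and assume the identity map belongs to 𝒜. Fix c ∈ [C], x̄ ∈ 𝒳, a ∈ 𝒜, k ∈ {0,…,K} and i_1,…,i_k ∈ [C]\{c}. Then the inner risk satisfies r_k(i_1,…,i_k) ≥ r_k^sup(i_1,…,i_k) − [ 2·‖f(a(x̄)) − f(x̄)‖ + 2·E_{x̄'~ρ_c} sup_{a',a''∈𝒜} ‖f(a''(x̄')) − f(a'(x̄'))‖ + max_{m∈[k]} E_{x̄_m~ρ_{i_m}} sup_{a',a''∈𝒜} ‖f(a''(x̄_m)) − f(a'(x̄_m))‖ + E_{x̄'~ρ_c} E_{a'~P_A} inf_{a''∈𝒜} ‖f(a'(x̄)) − f(a''(x̄'))‖ ], where r_k^sup(i_1,…,i_k) = log(1 + (K−k) + Σ_{m=1}^k exp(−f(x̄)ᵀ(μ_c − μ_{i_m}))). -/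
open MeasureTheory Real
open scoped BigOperators RealInnerProductSpace

noncomputable section


def lseAux {K : ℕ} (t : Fin K → ℝ) : ℝ := Real.log (1 + ∑ j, Real.exp (t j))

lemma lseAux_arg_pos {K : ℕ} (t : Fin K → ℝ) : (0:ℝ) < 1 + ∑ j, Real.exp (t j) := by
  have h : (0:ℝ) ≤ ∑ j, Real.exp (t j) :=
    Finset.sum_nonneg fun j _ => (Real.exp_pos _).le
  linarith

lemma lseAux_nonneg {K : ℕ} (t : Fin K → ℝ) : 0 ≤ lseAux t :=
  Real.log_nonneg (by
    have h : (0:ℝ) ≤ ∑ j, Real.exp (t j) :=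
      Finset.sum_nonneg fun j _ => (Real.exp_pos _).le
    linarith)

lemma lseAux_le {K : ℕ} {s t : Fin K → ℝ} {δ : ℝ} (hδ : 0 ≤ δ)
    (h : ∀ j, s j ≤ t j + δ) : lseAux s ≤ lseAux t + δ := by
  have h1 : 1 + ∑ j, Real.exp (s j) ≤ Real.exp δ * (1 + ∑ j, Real.exp (t j)) := by
    have hsum : ∑ j, Real.exp (s j) ≤ ∑ j, Real.exp (t j + δ) :=
      Finset.sum_le_sum fun j _ => Real.exp_le_exp.2 (h j)
    have h2 : ∑ j, Real.exp (t j + δ) = Real.exp δ * ∑ j, Real.exp (t j) := by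
      rw [Finset.mul_sum]; exact Finset.sum_congr rfl fun j _ => by rw [Real.exp_add]; ring
    have h3 : (1:ℝ) ≤ Real.exp δ := Real.one_le_exp hδ
    have h4 : (0:ℝ) ≤ ∑ j, Real.exp (t j) :=
      Finset.sum_nonneg fun j _ => (Real.exp_pos _).le
    nlinarith
  calc lseAux s ≤ Real.log (Real.exp δ * (1 + ∑ j, Real.exp (t j))) :=
        Real.log_le_log (lseAux_arg_pos s) h1
    _ = lseAux t + δ := by
        rw [Real.log_mul (Real.exp_ne_zero δ) (ne_of_gt (lseAux_arg_pos t)), Real.log_exp]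
        unfold lseAux; ring

lemma continuous_lseAux {K : ℕ} : Continuous (lseAux (K := K)) := by
  apply Continuous.log
  · exact continuous_const.add (continuous_finset_sum _ fun j _ =>
      Real.continuous_exp.comp (continuous_apply j))
  · exact fun t => (lseAux_arg_pos t).ne'

lemma convexOn_lseAux {K : ℕ} : ConvexOn ℝ Set.univ (lseAux (K := K)) := by
  refine ⟨convex_univ, fun x _ y _ a b ha hb hab => ?_⟩
  have hX := lseAux_arg_pos x
  have hY := lseAux_arg_pos y
  set X := 1 + ∑ j, Real.exp (x j) with hXdef
  set Y := 1 + ∑ j, Real.exp (y j) with hYdef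
  have hXa : (0:ℝ) < X ^ a := Real.rpow_pos_of_pos hX a
  have hYb : (0:ℝ) < Y ^ b := Real.rpow_pos_of_pos hY b
  have key : ∀ p q : ℝ, 0 < p → 0 < q →
      p ^ a * q ^ b ≤ X ^ a * Y ^ b * (a * (p / X) + b * (q / Y)) := by
    intro p q hp hq
    have h1 : (p / X) ^ a * (q / Y) ^ b ≤ a * (p / X) + b * (q / Y) :=
      Real.geom_mean_le_arith_mean2_weighted ha hb (by positivity) (by positivity) hab
    have h2 : (p / X) ^ a * (q / Y) ^ b = p ^ a * q ^ b / (X ^ a * Y ^ b) := by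
      rw [Real.div_rpow hp.le hX.le, Real.div_rpow hq.le hY.le]; ring
    rw [h2] at h1
    calc p ^ a * q ^ b = X ^ a * Y ^ b * (p ^ a * q ^ b / (X ^ a * Y ^ b)) := by
          field_simp
      _ ≤ X ^ a * Y ^ b * (a * (p / X) + b * (q / Y)) :=
          mul_le_mul_of_nonneg_left h1 (by positivity)
  have hmain : 1 + ∑ j, Real.exp ((a • x + b • y) j) ≤ X ^ a * Y ^ b := by
    have hterm : ∀ j, Real.exp ((a • x + b • y) j) ≤
        X ^ a * Y ^ b * (a * (Real.exp (x j) / X) + b * (Real.exp (y j) / Y)) := by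
      intro j
      have he : Real.exp ((a • x + b • y) j) = Real.exp (x j) ^ a * Real.exp (y j) ^ b := by
        simp only [Pi.add_apply, Pi.smul_apply, smul_eq_mul]
        rw [Real.exp_add, mul_comm a (x j), mul_comm b (y j), Real.exp_mul, Real.exp_mul]
      rw [he]; exact key _ _ (Real.exp_pos _) (Real.exp_pos _)
    have hone : (1:ℝ) ≤ X ^ a * Y ^ b * (a * (1 / X) + b * (1 / Y)) := by
      have := key 1 1 one_pos one_pos
      simpa using this
    have hsum : ∑ j, (X ^ a * Y ^ b * (a * (Real.exp (x j) / X) + b * (Real.exp (y j) / Y)))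
        = X ^ a * Y ^ b *
          (a * ((∑ j, Real.exp (x j)) / X) + b * ((∑ j, Real.exp (y j)) / Y)) := by
      rw [← Finset.mul_sum, Finset.sum_add_distrib, ← Finset.mul_sum, ← Finset.mul_sum,
        ← Finset.sum_div, ← Finset.sum_div]
    calc 1 + ∑ j, Real.exp ((a • x + b • y) j)
        ≤ X ^ a * Y ^ b * (a * (1 / X) + b * (1 / Y)) +
          ∑ j, (X ^ a * Y ^ b * (a * (Real.exp (x j) / X) + b * (Real.exp (y j) / Y))) :=
          add_le_add hone (Finset.sum_le_sum fun j _ => hterm j)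
      _ = X ^ a * Y ^ b * (a * (X / X) + b * (Y / Y)) := by
          rw [hsum, hXdef, hYdef]; ring
      _ = X ^ a * Y ^ b := by
          rw [div_self hX.ne', div_self hY.ne']
          linear_combination (X ^ a * Y ^ b) * hab
  have hlog := Real.log_le_log (lseAux_arg_pos (a • x + b • y)) hmain
  rw [Real.log_mul hXa.ne' hYb.ne', Real.log_rpow hX, Real.log_rpow hY] at hlog
  calc lseAux (a • x + b • y) ≤ a * Real.log X + b * Real.log Y := hlog
    _ = a • lseAux x + b • lseAux y := by simp [lseAux, smul_eq_mul, hXdef, hYdef]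

lemma integrable_of_bound_vec {α : Type*} [MeasurableSpace α] (μ : Measure α)
    [IsFiniteMeasure μ] {E : Type*} [NormedAddCommGroup E] {g : α → E}
    (hg : AEStronglyMeasurable g μ) (B : ℝ) (hB : ∀ x, ‖g x‖ ≤ B) : Integrable g μ :=
  Integrable.mono' (integrable_const B) hg (Filter.Eventually.of_forall hB)

lemma le_integral_lseAux {α : Type*} [MeasurableSpace α] {μ : Measure α}
    [IsProbabilityMeasure μ] {K : ℕ} {T : α → Fin K → ℝ} (hT : Measurable T)
    {B : ℝ} (hB0 : 0 ≤ B) (hB : ∀ z j, |T z j| ≤ B) :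
    lseAux (fun j => ∫ z, T z j ∂μ) ≤ ∫ z, lseAux (T z) ∂μ := by
  have hTi : Integrable T μ := by
    refine integrable_of_bound_vec μ hT.aestronglyMeasurable B fun z => ?_
    refine (pi_norm_le_iff_of_nonneg hB0).2 fun j => ?_
    rw [Real.norm_eq_abs]; exact hB z j
  have hgi : Integrable (lseAux ∘ T) μ := by
    refine integrable_of_bound_vec μ
      ((continuous_lseAux.measurable.comp hT).aestronglyMeasurable)
      (lseAux fun _ : Fin K => B) fun z => ?_
    show ‖lseAux (T z)‖ ≤ _
    rw [Real.norm_eq_abs, abs_of_nonneg (lseAux_nonneg _)]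
    have := lseAux_le (s := T z) (t := fun _ => B) (δ := 0) le_rfl
      (fun j => by have := (abs_le.1 (hB z j)).2; linarith)
    simpa using this
  have hJ := (convexOn_lseAux (K := K)).map_integral_le continuous_lseAux.continuousOn
      isClosed_univ (Filter.Eventually.of_forall fun z => Set.mem_univ _) hTi hgi
  have hco : (∫ z, T z ∂μ) = fun j => ∫ z, T z j ∂μ := by
    funext j
    exact ((ContinuousLinearMap.proj (R := ℝ) (φ := fun _ : Fin K => ℝ) j).integral_comp_comm
      hTi).symm
  rw [hco] at hJ
  exact hJ

lemma integral_pi_eval {ι : Type*} [Fintype ι] [DecidableEq ι] {α : Type*}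
    [MeasurableSpace α] (μ : ι → Measure α) [∀ i, IsProbabilityMeasure (μ i)] (j : ι)
    (g : α → ℝ) (hg : AEStronglyMeasurable g (μ j)) :
    ∫ x : ι → α, g (x j) ∂(Measure.pi μ) = ∫ y, g y ∂(μ j) := by
  have hmap : (Measure.pi μ).map (fun x : ι → α => x j) = μ j := by
    ext s hs
    rw [Measure.map_apply (measurable_pi_apply j) hs]
    have hpre : (fun x : ι → α => x j) ⁻¹' s
        = Set.pi Set.univ (Function.update (fun _ : ι => (Set.univ : Set α)) j s) := by
      ext x
      simp only [Set.mem_preimage, Set.mem_pi, Set.mem_univ, forall_true_left]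
      constructor
      · intro hx i
        rcases eq_or_ne i j with rfl | hij
        · rwa [Function.update_self]
        · rw [Function.update_of_ne hij]; exact Set.mem_univ _
      · intro hx; have := hx j; rwa [Function.update_self] at this
    rw [hpre, Measure.pi_pi]
    rw [Finset.prod_eq_single j
      (fun ii _ hij => by rw [Function.update_of_ne hij]; exact measure_univ)
      (fun h => absurd (Finset.mem_univ j) h)]
    rw [Function.update_self]
  calc ∫ x : ι → α, g (x j) ∂(Measure.pi μ)
      = ∫ y, g y ∂((Measure.pi μ).map (fun x : ι → α => x j)) :=
        (integral_map (measurable_pi_apply j).aemeasurable (by rwa [hmap])).symm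
    _ = ∫ y, g y ∂(μ j) := by rw [hmap]


variable {X : Type*} [MeasurableSpace X] {Ω : Type*} [MeasurableSpace Ω] {d C : ℕ}

/-- The InfoNCE loss in logistic form:
`L^un(x, x', {x_k}; f) = log(1 + Σ_k exp(−f(x)ᵀ[f(x') − f(x_k)]))`. -/
def infoNCE (f : X → EuclideanSpace ℝ (Fin d)) (K : ℕ) (x x' : X) (xs : Fin K → X) : ℝ :=
  Real.log (1 + ∑ k, Real.exp (-⟪f x, f x' - f (xs k)⟫))

/-- The probability of drawing the class tuple `(c, c_1, …, c_K)` from `π^{K+1}`. -/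
def clsWeight (pr : Fin C → ℝ) {K : ℕ} (c : Fin C) (cs : Fin K → Fin C) : ℝ :=
  pr c * ∏ k, pr (cs k)

/-- The unsupervised contrastive risk `R^un(f)`. -/
def Run (pr : Fin C → ℝ) (ρ : Fin C → Measure X) (PA : Measure Ω) (A : Ω → X → X)
    (f : X → EuclideanSpace ℝ (Fin d)) (K : ℕ) : ℝ :=
  ∑ c, ∑ cs : Fin K → Fin C, clsWeight pr c cs *
    ∫ xb, ∫ xs, ∫ a, ∫ a', ∫ as,
        infoNCE f K (A a xb) (A a' xb) (fun k => A (as k) (xs k))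
      ∂(Measure.pi fun _ : Fin K => PA) ∂PA ∂PA
      ∂(Measure.pi fun k => ρ (cs k)) ∂(ρ c)

/-- The mean-classifier weight `μ_c = E_{x̄~ρ_c} f(x̄)`. -/
def meanRep (ρ : Fin C → Measure X) (f : X → EuclideanSpace ℝ (Fin d)) (c : Fin C) :
    EuclideanSpace ℝ (Fin d) :=
  ∫ xb, f xb ∂(ρ c)

/-- The collision number `Col(c, {c_k}) = Σ_k 1[c_k = c]`. -/
def colNum {K : ℕ} (c : Fin C) (cs : Fin K → Fin C) : ℕ :=
  ∑ k, if cs k = c then 1 else 0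

/-- The class-collision probability `τ_K = P(Col ≠ 0)`. -/
def tauK (pr : Fin C → ℝ) (K : ℕ) : ℝ :=
  ∑ c, ∑ cs : Fin K → Fin C, if colNum c cs ≠ 0 then clsWeight pr c cs else 0

/-- The expected logistic loss of the mean classifier on the task `(c, c_1, …, c_K)`. -/
def supLoss (ρ : Fin C → Measure X) (f : X → EuclideanSpace ℝ (Fin d)) {K : ℕ}
    (c : Fin C) (cs : Fin K → Fin C) : ℝ :=
  ∫ xb, Real.log (1 + ∑ k, Real.exp (-⟪f xb, meanRep ρ f c - meanRep ρ f (cs k)⟫)) ∂(ρ c)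

/-- The supervised risk of the mean classifier, conditioned on no class collision. -/
def Rsup (pr : Fin C → ℝ) (ρ : Fin C → Measure X) (f : X → EuclideanSpace ℝ (Fin d))
    (K : ℕ) : ℝ :=
  (∑ c, ∑ cs : Fin K → Fin C,
    if colNum c cs = 0 then clsWeight pr c cs * supLoss ρ f c cs else 0) / (1 - tauK pr K)

/-- `E_{(c,c_1,…,c_K)~π^{K+1}} log(Col + 1)`. -/
def expLogCol (pr : Fin C → ℝ) (K : ℕ) : ℝ :=
  ∑ c, ∑ cs : Fin K → Fin C, clsWeight pr c cs * Real.log (colNum c cs + 1)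

/-- `D_min(f)`: expected minimum distance between augmentations of two i.i.d. same-class
images, `E_c E_{x̄,x̄'~ρ_c} E_a inf_{a'} ‖f(a(x̄)) − f(a'(x̄'))‖`. -/
def Dmin (pr : Fin C → ℝ) (ρ : Fin C → Measure X) (PA : Measure Ω) (A : Ω → X → X)
    (f : X → EuclideanSpace ℝ (Fin d)) : ℝ :=
  ∑ c, pr c *
    ∫ xb, ∫ xb', ∫ a, (⨅ a' : Ω, ‖f (A a xb) - f (A a' xb')‖) ∂PA ∂(ρ c) ∂(ρ c)

/-- `D_max(f)`: expected maximum distance between two augmentations of the same image,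
`E_c E_{x̄'~ρ_c} sup_{a,a'} ‖f(a(x̄')) − f(a'(x̄'))‖`. -/
def Dmax (pr : Fin C → ℝ) (ρ : Fin C → Measure X) (A : Ω → X → X)
    (f : X → EuclideanSpace ℝ (Fin d)) : ℝ :=
  ∑ c, pr c * ∫ xb', (⨆ p : Ω × Ω, ‖f (A p.1 xb') - f (A p.2 xb')‖) ∂(ρ c)

/-- The intermediate supervised risk `R̄^sup(f)`. -/
def Rbarsup (pr : Fin C → ℝ) (ρ : Fin C → Measure X) (f : X → EuclideanSpace ℝ (Fin d))
    (K : ℕ) : ℝ :=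
  ∑ c, ∑ cs : Fin K → Fin C, clsWeight pr c cs * supLoss ρ f c cs

/-- The inner risk `r_k(i_1,…,i_k)` for fixed anchor class `c`, anchor image `xb` and
anchor augmentation `a`: the first `k` negatives are drawn from classes `i_1,…,i_k` and
the remaining `K − k` negatives from class `c`. -/
def innerRisk (ρ : Fin C → Measure X) (PA : Measure Ω) (A : Ω → X → X)
    (f : X → EuclideanSpace ℝ (Fin d)) (K : ℕ) (c : Fin C) (xb : X) (a : Ω)
    (k : ℕ) (i : Fin k → Fin C) : ℝ :=
  ∫ xs, ∫ a', ∫ as, infoNCE f K (A a xb) (A a' xb) (fun j => A (as j) (xs j))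
    ∂(Measure.pi fun _ : Fin K => PA) ∂PA
    ∂(Measure.pi fun j : Fin K => ρ (if h : (j : ℕ) < k then i ⟨j, h⟩ else c))

/-- The weight `p_k(i_1,…,i_k) = binom(K,k)·π_{i_1}⋯π_{i_k}·π_c^{K−k}`. -/
def pWeight (pr : Fin C → ℝ) (K : ℕ) (c : Fin C) (k : ℕ) (i : Fin k → Fin C) : ℝ :=
  (Nat.choose K k : ℝ) * (∏ m, pr (i m)) * pr c ^ (K - k)

/-- `r_k^sup(i_1,…,i_k) = log(1 + (K−k) + Σ_{m=1}^k exp(−uᵀ(μ_c − μ_{i_m})))`, where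
`u` is the representation of the anchor. -/
def rkSup (ρ : Fin C → Measure X) (f : X → EuclideanSpace ℝ (Fin d)) (K : ℕ)
    (c : Fin C) (u : EuclideanSpace ℝ (Fin d)) (k : ℕ) (i : Fin k → Fin C) : ℝ :=
  Real.log (1 + ((K - k : ℕ) : ℝ) +
    ∑ m, Real.exp (-⟪u, meanRep ρ f c - meanRep ρ f (i m)⟫))

set_option maxHeartbeats 1000000 in
/-- **Theorem 5 (Bound of the inner risk).**
For `‖f(·)‖ = 1` and identity among the augmentations, for every fixed anchor class `c`,
image `x̄`, augmentation `a`, `k ≤ K` and classes `i_1,…,i_k ≠ c`,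
`r_k(i_1,…,i_k) ≥ r_k^sup(i_1,…,i_k) − [2‖f(a(x̄)) − f(x̄)‖
  + 2·E_{x̄'~ρ_c} sup_{a',a''}‖f(a''(x̄')) − f(a'(x̄'))‖
  + max_m E_{x̄_m~ρ_{i_m}} sup_{a',a''}‖f(a''(x̄_m)) − f(a'(x̄_m))‖
  + E_{x̄'~ρ_c} E_{a'} inf_{a''}‖f(a'(x̄)) − f(a''(x̄'))‖]`. -/
theorem inner_risk_bound
    (K : ℕ) (hC : 1 ≤ C) (hK : 1 ≤ K)
    (pr : Fin C → ℝ) (hpr : ∀ c, 0 ≤ pr c) (hpr1 : ∑ c, pr c = 1)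
    (ρ : Fin C → Measure X) [∀ c, IsProbabilityMeasure (ρ c)]
    (PA : Measure Ω) [IsProbabilityMeasure PA]
    (A : Ω → X → X) (hA : Measurable fun p : Ω × X => A p.1 p.2)
    (f : X → EuclideanSpace ℝ (Fin d)) (hfm : Measurable f)
    (hf : ∀ x, ‖f x‖ = 1)
    (hid : ∃ ω : Ω, A ω = id)
    (c : Fin C) (xb : X) (a : Ω)
    (k : ℕ) (hk : k ≤ K) (i : Fin k → Fin C) (hi : ∀ m, i m ≠ c)
    (hsupc : Integrable
      (fun xb' => ⨆ p : Ω × Ω, ‖f (A p.1 xb') - f (A p.2 xb')‖) (ρ c))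
    (hsupi : ∀ m : Fin k, Integrable
      (fun xm => ⨆ p : Ω × Ω, ‖f (A p.1 xm) - f (A p.2 xm)‖) (ρ (i m)))
    (hinf1 : ∀ xb' : X,
      Integrable (fun a' => ⨅ a'' : Ω, ‖f (A a' xb) - f (A a'' xb')‖) PA)
    (hinf2 : Integrable
      (fun xb' => ∫ a', (⨅ a'' : Ω, ‖f (A a' xb) - f (A a'' xb')‖) ∂PA) (ρ c)) :
    innerRisk ρ PA A f K c xb a k i ≥
      rkSup ρ f K c (f xb) k i -
        (2 * ‖f (A a xb) - f xb‖ +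
          2 * (∫ xb', (⨆ p : Ω × Ω, ‖f (A p.1 xb') - f (A p.2 xb')‖) ∂(ρ c)) +
          (⨆ m : Fin k,
            ∫ xm, (⨆ p : Ω × Ω, ‖f (A p.1 xm) - f (A p.2 xm)‖) ∂(ρ (i m))) +
          ∫ xb', ∫ a', (⨅ a'' : Ω, ‖f (A a' xb) - f (A a'' xb')‖) ∂PA ∂(ρ c)) := by
  classical
  obtain ⟨ω₀, hω₀⟩ := hid
  have hΩ : Nonempty Ω := ⟨ω₀⟩
  -- abbreviations matching the goal
  set ESc := ∫ xb', (⨆ p : Ω × Ω, ‖f (A p.1 xb') - f (A p.2 xb')‖) ∂(ρ c) with hESc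
  set MX := ⨆ m : Fin k,
      ∫ xm, (⨆ p : Ω × Ω, ‖f (A p.1 xm) - f (A p.2 xm)‖) ∂(ρ (i m)) with hMX
  set DT := ∫ xb', ∫ a', (⨅ a'' : Ω, ‖f (A a' xb) - f (A a'' xb')‖) ∂PA ∂(ρ c) with hDT
  set u := f xb with hu_def
  set uh := f (A a xb) with huh_def
  have hu : ‖u‖ = 1 := hf xb
  -- basic measurability
  have hfA : Measurable (fun p : Ω × X => f (A p.1 p.2)) := hfm.comp hA
  have hfAx : ∀ x : X, Measurable fun ω : Ω => f (A ω x) := fun x =>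
    hfA.comp (measurable_id.prodMk measurable_const)
  have hnorm2 : ∀ z w : EuclideanSpace ℝ (Fin d), ‖z‖ ≤ 1 → ‖w‖ ≤ 1 → ‖z - w‖ ≤ 2 :=
    fun z w hz hw => (norm_sub_le z w).trans (by linarith)
  have hFi : ∀ x, Integrable (fun ω => f (A ω x)) PA := fun x =>
    integrable_of_bound_vec PA (hfAx x).aestronglyMeasurable 1 fun ω => (hf _).le
  -- the augmented mean of one image
  set m := fun x : X => ∫ ω, f (A ω x) ∂PA with hmdef
  have hm_sm : StronglyMeasurable m := by
    have h1 : StronglyMeasurable (fun p : X × Ω => f (A p.2 p.1)) :=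
      (hfm.comp (hA.comp (measurable_snd.prodMk measurable_fst))).stronglyMeasurable
    exact h1.integral_prod_right'
  have hm_norm : ∀ x, ‖m x‖ ≤ 1 := by
    intro x
    calc ‖m x‖ ≤ 1 * (PA Set.univ).toReal :=
          norm_integral_le_of_norm_le_const (Filter.Eventually.of_forall fun ω => (hf _).le)
      _ = 1 := by simp
  have hm_int : ∀ j : Fin C, Integrable m (ρ j) := fun j =>
    integrable_of_bound_vec _ hm_sm.aestronglyMeasurable 1 hm_norm
  have hf_int : ∀ j : Fin C, Integrable f (ρ j) := fun j =>
    integrable_of_bound_vec _ hfm.aestronglyMeasurable 1 fun x => (hf x).le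
  -- augmented class means
  set ν := fun j : Fin C => ∫ x, m x ∂(ρ j) with hνdef
  have hν_norm : ∀ j, ‖ν j‖ ≤ 1 := by
    intro j
    calc ‖ν j‖ ≤ 1 * ((ρ j) Set.univ).toReal :=
          norm_integral_le_of_norm_le_const (Filter.Eventually.of_forall fun x => hm_norm x)
      _ = 1 := by simp
  -- sup of augmentation distances
  set s2 := fun x : X => ⨆ p : Ω × Ω, ‖f (A p.1 x) - f (A p.2 x)‖ with hs2def
  have hs2bdd : ∀ x, BddAbove (Set.range fun p : Ω × Ω => ‖f (A p.1 x) - f (A p.2 x)‖) :=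
    fun x => ⟨2, by rintro r ⟨p, rfl⟩; exact hnorm2 _ _ (hf _).le (hf _).le⟩
  have hs2 : ∀ (x : X) (ω ω' : Ω), ‖f (A ω x) - f (A ω' x)‖ ≤ s2 x :=
    fun x ω ω' => le_ciSup (hs2bdd x) (ω, ω')
  have hs2_nonneg : ∀ x, 0 ≤ s2 x := fun x => le_trans (by simp) (hs2 x ω₀ ω₀)
  have hms : ∀ (ω : Ω) (x : X), ‖f (A ω x) - m x‖ ≤ s2 x := by
    intro ω x
    have h1 : f (A ω x) - m x = ∫ ω', (f (A ω x) - f (A ω' x)) ∂PA := by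
      rw [integral_sub (integrable_const _) (hFi x), integral_const]
      simp [hmdef]
    rw [h1]
    calc ‖∫ ω', (f (A ω x) - f (A ω' x)) ∂PA‖ ≤ s2 x * (PA Set.univ).toReal :=
          norm_integral_le_of_norm_le_const (Filter.Eventually.of_forall fun ω' => hs2 x ω ω')
      _ = s2 x := by simp
  have hmfx : ∀ x, ‖m x - f x‖ ≤ s2 x := by
    intro x
    have h1 := hms ω₀ x
    rw [hω₀] at h1
    simpa [norm_sub_rev] using h1
  have hνμ : ∀ j : Fin C, Integrable s2 (ρ j) →
      ‖ν j - meanRep ρ f j‖ ≤ ∫ x, s2 x ∂(ρ j) := by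
    intro j hint
    have h1 : ν j - meanRep ρ f j = ∫ x, (m x - f x) ∂(ρ j) := by
      rw [integral_sub (hm_int j) (hf_int j)]; rfl
    rw [h1]
    calc ‖∫ x, (m x - f x) ∂(ρ j)‖ ≤ ∫ x, ‖m x - f x‖ ∂(ρ j) :=
          norm_integral_le_integral_norm _
      _ ≤ ∫ x, s2 x ∂(ρ j) :=
          integral_mono (((hm_int j).sub (hf_int j)).norm) hint fun x => hmfx x
  -- ψ : distance of augmented anchor positive to augmented class mean
  set ψ := fun a' : Ω => ‖f (A a' xb) - ν c‖ with hψdef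
  have hv_meas : Measurable fun a' : Ω => f (A a' xb) :=
    hfA.comp (measurable_id.prodMk measurable_const)
  have hψ_meas : Measurable ψ := (hv_meas.sub measurable_const).norm
  have hψ_nonneg : ∀ a', 0 ≤ ψ a' := fun a' => norm_nonneg _
  have hψ_bd : ∀ a', ψ a' ≤ 2 := fun a' => hnorm2 _ _ (hf _).le (hν_norm c)
  have hψ_int : Integrable ψ PA :=
    integrable_of_bound_vec PA hψ_meas.aestronglyMeasurable 2 fun a' => by
      rw [Real.norm_eq_abs, abs_of_nonneg (hψ_nonneg a')]; exact hψ_bd a'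
  set infd := fun (a' : Ω) (x : X) => ⨅ a'' : Ω, ‖f (A a' xb) - f (A a'' x)‖ with hinfddef
  have hinfd_le : ∀ a' x, ‖f (A a' xb) - m x‖ - s2 x ≤ infd a' x := by
    intro a' x
    refine le_ciInf fun b => ?_
    have h1 := dist_triangle (f (A a' xb)) (f (A b x)) (m x)
    simp only [dist_eq_norm] at h1
    have h2 := hms b x
    linarith
  -- Fubini for the function Ψ(a', x) = ‖f(A a' xb) - m x‖
  have hΨsm : StronglyMeasurable (fun p : Ω × X => ‖f (A p.1 xb) - m p.2‖) :=
    (((hfA.comp ((measurable_fst).prodMk measurable_const)).stronglyMeasurable.sub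
      (hm_sm.comp_measurable measurable_snd)).norm)
  have hΨint : Integrable (fun p : Ω × X => ‖f (A p.1 xb) - m p.2‖) (PA.prod (ρ c)) := by
    refine integrable_of_bound_vec _ hΨsm.aestronglyMeasurable 2 fun p => ?_
    rw [Real.norm_eq_abs, abs_of_nonneg (norm_nonneg _)]
    exact hnorm2 _ _ (hf _).le (hm_norm _)
  have hψle : ∫ a', ψ a' ∂PA ≤ DT + ESc := by
    have step1 : ∀ a', ψ a' ≤ ∫ x, ‖f (A a' xb) - m x‖ ∂(ρ c) := by
      intro a'
      have h1 : f (A a' xb) - ν c = ∫ x, (f (A a' xb) - m x) ∂(ρ c) := by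
        rw [integral_sub (integrable_const _) (hm_int c), integral_const]
        simp [hνdef]
      calc ψ a' = ‖∫ x, (f (A a' xb) - m x) ∂(ρ c)‖ := by rw [hψdef]; simp only; rw [h1]
        _ ≤ ∫ x, ‖f (A a' xb) - m x‖ ∂(ρ c) := norm_integral_le_integral_norm _
    have step2 : ∫ a', ψ a' ∂PA ≤ ∫ a', ∫ x, ‖f (A a' xb) - m x‖ ∂(ρ c) ∂PA :=
      integral_mono hψ_int hΨint.integral_prod_left step1
    have step3 : ∫ a', ∫ x, ‖f (A a' xb) - m x‖ ∂(ρ c) ∂PA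
        = ∫ x, ∫ a', ‖f (A a' xb) - m x‖ ∂PA ∂(ρ c) := integral_integral_swap hΨint
    have step4 : ∫ x, ∫ a', ‖f (A a' xb) - m x‖ ∂PA ∂(ρ c)
        ≤ ∫ x, ((∫ a', infd a' x ∂PA) + s2 x) ∂(ρ c) := by
      refine integral_mono hΨint.swap.integral_prod_left (hinf2.add hsupc) fun x => ?_
      have h5 : ∀ a', ‖f (A a' xb) - m x‖ ≤ infd a' x + s2 x := by
        intro a'; have := hinfd_le a' x; linarith
      have h6 : Integrable (fun a' => ‖f (A a' xb) - m x‖) PA := by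
        refine integrable_of_bound_vec _ ((hv_meas.sub measurable_const).norm).aestronglyMeasurable
          2 fun a' => ?_
        rw [Real.norm_eq_abs, abs_of_nonneg (norm_nonneg _)]
        exact hnorm2 _ _ (hf _).le (hm_norm _)
      calc ∫ a', ‖f (A a' xb) - m x‖ ∂PA ≤ ∫ a', (infd a' x + s2 x) ∂PA :=
            integral_mono h6 ((hinf1 x).add (integrable_const _)) h5
        _ = (∫ a', infd a' x ∂PA) + s2 x := by
            rw [integral_add (hinf1 x) (integrable_const _), integral_const]; simp; rfl
    have step5 : ∫ x, ((∫ a', infd a' x ∂PA) + s2 x) ∂(ρ c) = DT + ESc := by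
      rw [integral_add hinf2 hsupc]
    linarith
  -- uniform bound on the loss
  have hinner_abs : ∀ (z w : EuclideanSpace ℝ (Fin d)), ‖z‖ ≤ 1 → ‖w‖ ≤ 2 → |⟪z, w⟫| ≤ 2 := by
    intro z w hz hw
    calc |⟪z, w⟫| ≤ ‖z‖ * ‖w‖ := abs_real_inner_le_norm z w
      _ ≤ 1 * 2 := mul_le_mul hz hw (norm_nonneg w) zero_le_one
      _ = 2 := by norm_num
  set BL := lseAux (fun _ : Fin K => (2:ℝ)) with hBL
  have hLbound : ∀ y y' : X, ∀ ys : Fin K → X, |infoNCE f K y y' ys| ≤ BL := by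
    intro y y' ys
    have h0 : infoNCE f K y y' ys = lseAux (fun j => -⟪f y, f y' - f (ys j)⟫) := rfl
    rw [h0, abs_of_nonneg (lseAux_nonneg _)]
    have := lseAux_le (s := fun j => -⟪f y, f y' - f (ys j)⟫) (t := fun _ => (2:ℝ)) (δ := 0)
      le_rfl (fun j => by
        have h1 := hinner_abs (f y) (f y' - f (ys j)) (hf _).le (hnorm2 _ _ (hf _).le (hf _).le)
        have h2 := (abs_le.1 h1).1
        simp only [neg_le, add_zero] at *
        linarith)
    simpa using this
  have hcoord : ∀ (xs : Fin K → X) (j : Fin K),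
      Measurable fun as : Fin K → Ω => f (A (as j) (xs j)) := by
    intro xs j
    have h1 : Measurable fun as : Fin K → Ω => ((as j, xs j) : Ω × X) :=
      (measurable_pi_apply j).prodMk measurable_const
    exact hfA.comp h1
  -- target coordinates after Jensen over negatives
  set T2 := fun (xs : Fin K → X) (j : Fin K) => (⟪u, m (xs j)⟫ - ⟪u, ν c⟫ : ℝ) with hT2
  have key23 : ∀ (xs : Fin K → X) (a' : Ω),
      lseAux (T2 xs) - (2 * ‖uh - u‖ + ψ a')
        ≤ ∫ as, infoNCE f K (A a xb) (A a' xb) (fun j => A (as j) (xs j))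
            ∂(Measure.pi fun _ : Fin K => PA) := by
    intro xs a'
    set v := f (A a' xb) with hv
    set T := fun (as : Fin K → Ω) (j : Fin K) => (⟪u, f (A (as j) (xs j))⟫ - ⟪u, ν c⟫ : ℝ)
      with hT
    have hTmeas : Measurable T := by
      refine measurable_pi_lambda _ fun j => Measurable.sub ?_ measurable_const
      exact Measurable.inner measurable_const (hcoord xs j)
    have hTbd : ∀ as j, |T as j| ≤ 2 := by
      intro as j
      have h1 : |⟪u, f (A (as j) (xs j)) - ν c⟫| ≤ 2 :=
        hinner_abs _ _ hu.le (hnorm2 _ _ (hf _).le (hν_norm c))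
      rw [inner_sub_right] at h1
      exact h1
    have hJ := le_integral_lseAux (μ := Measure.pi fun _ : Fin K => PA) hTmeas
      (by norm_num) hTbd
    have hco : (fun j => ∫ as, T as j ∂(Measure.pi fun _ : Fin K => PA)) = T2 xs := by
      funext j
      have hgm : AEStronglyMeasurable (fun ω : Ω => (⟪u, f (A ω (xs j))⟫ - ⟪u, ν c⟫ : ℝ)) PA :=
        ((Measurable.inner measurable_const (hfAx (xs j))).sub measurable_const).aestronglyMeasurable
      have h1 : ∫ as, T as j ∂(Measure.pi fun _ : Fin K => PA)
          = ∫ ω, (⟪u, f (A ω (xs j))⟫ - ⟪u, ν c⟫ : ℝ) ∂PA :=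
        integral_pi_eval (fun _ : Fin K => PA) j
          (fun ω => (⟪u, f (A ω (xs j))⟫ - ⟪u, ν c⟫ : ℝ)) hgm
      rw [h1, integral_sub ?_ (integrable_const _), integral_const, integral_inner (hFi (xs j)) u]
      · simp [hT2]; rfl
      · refine integrable_of_bound_vec _
          ((Measurable.inner measurable_const (hfAx (xs j)))).aestronglyMeasurable 1 fun ω => ?_
        rw [Real.norm_eq_abs]
        calc |⟪u, f (A ω (xs j))⟫| ≤ ‖u‖ * ‖f (A ω (xs j))‖ := abs_real_inner_le_norm _ _
          _ = 1 := by rw [hu, hf]; norm_num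
    rw [hco] at hJ
    -- pointwise comparison of the two lse's
    have hpoint : ∀ as : Fin K → Ω, lseAux (T as)
        ≤ infoNCE f K (A a xb) (A a' xb) (fun j => A (as j) (xs j))
          + (2 * ‖uh - u‖ + ψ a') := by
      intro as
      have h0 : infoNCE f K (A a xb) (A a' xb) (fun j => A (as j) (xs j))
          = lseAux (fun j => -⟪uh, v - f (A (as j) (xs j))⟫) := rfl
      rw [h0]
      refine lseAux_le (add_nonneg (by positivity) (hψ_nonneg a')) fun j => ?_
      set w := f (A (as j) (xs j)) with hw
      have hdiff : T as j - (-⟪uh, v - w⟫) = ⟪uh - u, v - w⟫ + ⟪u, v - ν c⟫ := by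
        simp only [hT, inner_sub_left, inner_sub_right]
        ring
      have h1 : |⟪uh - u, v - w⟫| ≤ 2 * ‖uh - u‖ := by
        have ha1 := abs_real_inner_le_norm (uh - u) (v - w)
        have ha2 : ‖v - w‖ ≤ 2 := hnorm2 _ _ (hf _).le (hf _).le
        nlinarith [norm_nonneg (uh - u)]
      have h2 : |⟪u, v - ν c⟫| ≤ ψ a' := by
        have := abs_real_inner_le_norm u (v - ν c)
        rw [hu, one_mul] at this
        exact this
      have h3 := (abs_le.1 h1).2
      have h4 := (abs_le.1 h2).2
      have h5 : T as j - (-⟪uh, v - w⟫) ≤ 2 * ‖uh - u‖ + ψ a' := by rw [hdiff]; linarith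
      linarith
    -- integrate the pointwise bound
    have hLmeas : Measurable (fun as : Fin K → Ω =>
        infoNCE f K (A a xb) (A a' xb) fun j => A (as j) (xs j)) := by
      apply Measurable.log
      apply Measurable.add measurable_const
      apply Finset.measurable_sum
      intro j _
      refine Measurable.exp (Measurable.neg ?_)
      exact Measurable.inner measurable_const
        (Measurable.sub measurable_const (hcoord xs j))
    have hLi : Integrable (fun as : Fin K → Ω =>
        infoNCE f K (A a xb) (A a' xb) fun j => A (as j) (xs j))
        (Measure.pi fun _ : Fin K => PA) := by
      refine integrable_of_bound_vec _ hLmeas.aestronglyMeasurable BL fun as => ?_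
      rw [Real.norm_eq_abs]; exact hLbound _ _ _
    have hlsei : Integrable (fun as => lseAux (T as)) (Measure.pi fun _ : Fin K => PA) := by
      refine integrable_of_bound_vec _
        ((continuous_lseAux.measurable.comp hTmeas).aestronglyMeasurable)
        (lseAux fun _ : Fin K => (2:ℝ)) fun as => ?_
      rw [Real.norm_eq_abs, abs_of_nonneg (lseAux_nonneg _)]
      have := lseAux_le (s := T as) (t := fun _ => (2:ℝ)) (δ := 0) le_rfl
        (fun j => by
          have h9 := (abs_le.1 (hTbd as j)).2
          show T as j ≤ 2 + 0
          linarith)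
      simpa using this
    have hmono := integral_mono hlsei (hLi.add (integrable_const (2 * ‖uh - u‖ + ψ a')))
      hpoint
    simp only [Pi.add_apply] at hmono
    have hIc := integral_add hLi (integrable_const (2 * ‖uh - u‖ + ψ a'))
    simp only [integral_const, measure_univ, probReal_univ, one_smul, smul_eq_mul] at hIc
    rw [hIc] at hmono
    linarith
  -- measurability of the nested integrals
  have hLL : Measurable (fun q : ((Fin K → X) × Ω) × (Fin K → Ω) =>
      infoNCE f K (A a xb) (A q.1.2 xb) fun j => A (q.2 j) (q.1.1 j)) := by
    apply Measurable.log
    apply Measurable.add measurable_const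
    apply Finset.measurable_sum
    intro j _
    have hm1 : Measurable fun q : ((Fin K → X) × Ω) × (Fin K → Ω) => f (A q.1.2 xb) := by
      have h1 : Measurable fun q : ((Fin K → X) × Ω) × (Fin K → Ω) => ((q.1.2, xb) : Ω × X) :=
        (measurable_snd.comp measurable_fst).prodMk measurable_const
      exact hfA.comp h1
    have hm2 : Measurable fun q : ((Fin K → X) × Ω) × (Fin K → Ω) =>
        f (A (q.2 j) (q.1.1 j)) := by
      have h1 : Measurable fun q : ((Fin K → X) × Ω) × (Fin K → Ω) =>
          ((q.2 j, q.1.1 j) : Ω × X) :=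
        ((measurable_pi_apply j).comp measurable_snd).prodMk
          ((measurable_pi_apply j).comp (measurable_fst.comp measurable_fst))
      exact hfA.comp h1
    exact (Measurable.inner measurable_const (hm1.sub hm2)).neg.exp
  have hΦsm : StronglyMeasurable (fun p : (Fin K → X) × Ω =>
      ∫ as, infoNCE f K (A a xb) (A p.2 xb) (fun j => A (as j) (p.1 j))
        ∂(Measure.pi fun _ : Fin K => PA)) :=
    hLL.stronglyMeasurable.integral_prod_right'
  have hΦbd : ∀ p : (Fin K → X) × Ω, |∫ as, infoNCE f K (A a xb) (A p.2 xb)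
      (fun j => A (as j) (p.1 j)) ∂(Measure.pi fun _ : Fin K => PA)| ≤ BL := by
    intro p
    rw [← Real.norm_eq_abs]
    calc ‖∫ as, infoNCE f K (A a xb) (A p.2 xb) (fun j => A (as j) (p.1 j))
          ∂(Measure.pi fun _ : Fin K => PA)‖
        ≤ BL * ((Measure.pi fun _ : Fin K => PA) Set.univ).toReal :=
          norm_integral_le_of_norm_le_const (Filter.Eventually.of_forall fun as => by
            rw [Real.norm_eq_abs]; exact hLbound _ _ _)
      _ = BL := by simp
  have hΦint : ∀ xs : Fin K → X, Integrable (fun a' : Ω =>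
      ∫ as, infoNCE f K (A a xb) (A a' xb) (fun j => A (as j) (xs j))
        ∂(Measure.pi fun _ : Fin K => PA)) PA := by
    intro xs
    refine integrable_of_bound_vec _ ((hΦsm.comp_measurable
      (measurable_const.prodMk measurable_id)).aestronglyMeasurable) BL fun a' => ?_
    rw [Real.norm_eq_abs]; exact hΦbd (xs, a')
  -- integrate over the positive augmentation a'
  have hxs : ∀ xs : Fin K → X,
      lseAux (T2 xs) - (2 * ‖uh - u‖ + ∫ a', ψ a' ∂PA)
        ≤ ∫ a', ∫ as, infoNCE f K (A a xb) (A a' xb) (fun j => A (as j) (xs j))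
            ∂(Measure.pi fun _ : Fin K => PA) ∂PA := by
    intro xs
    have h2 : ∀ a' : Ω, lseAux (T2 xs) - 2 * ‖uh - u‖ - ψ a'
        ≤ ∫ as, infoNCE f K (A a xb) (A a' xb) (fun j => A (as j) (xs j))
            ∂(Measure.pi fun _ : Fin K => PA) := by
      intro a'; have := key23 xs a'; linarith
    have h3 : Integrable (fun a' => lseAux (T2 xs) - 2 * ‖uh - u‖ - ψ a') PA := by
      exact (integrable_const (lseAux (T2 xs) - 2 * ‖uh - u‖)).sub hψ_int
    have h4 := integral_mono h3 (hΦint xs) h2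
    have h5 : ∫ a', (lseAux (T2 xs) - 2 * ‖uh - u‖ - ψ a') ∂PA
        = lseAux (T2 xs) - 2 * ‖uh - u‖ - ∫ a', ψ a' ∂PA := by
      rw [integral_sub (integrable_const _) hψ_int, integral_const]; simp
    rw [h5] at h4
    linarith
  -- Jensen over the tuple of negative images
  set cls := fun j : Fin K => if h : (j : ℕ) < k then i ⟨j, h⟩ else c with hcls
  have hT2meas : Measurable T2 := by
    refine measurable_pi_lambda _ fun j => Measurable.sub ?_ measurable_const
    refine Measurable.inner measurable_const ?_
    exact hm_sm.measurable.comp (measurable_pi_apply j)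
  have hT2bd : ∀ xs j, |T2 xs j| ≤ 2 := by
    intro xs j
    have h1 : |⟪u, m (xs j) - ν c⟫| ≤ 2 :=
      hinner_abs _ _ hu.le (hnorm2 _ _ (hm_norm _) (hν_norm c))
    rw [inner_sub_right] at h1
    exact h1
  have hJ2 := le_integral_lseAux (μ := Measure.pi fun j => ρ (cls j)) hT2meas
    (by norm_num) hT2bd
  have hT3 : (fun j => ∫ xs, T2 xs j ∂(Measure.pi fun j' => ρ (cls j')))
      = fun j : Fin K => (⟪u, ν (cls j)⟫ - ⟪u, ν c⟫ : ℝ) := by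
    funext j
    have hgm : AEStronglyMeasurable (fun x : X => (⟪u, m x⟫ - ⟪u, ν c⟫ : ℝ)) (ρ (cls j)) :=
      ((Measurable.inner measurable_const hm_sm.measurable).sub
        measurable_const).aestronglyMeasurable
    have h1 : ∫ xs, T2 xs j ∂(Measure.pi fun j' => ρ (cls j'))
        = ∫ x, (⟪u, m x⟫ - ⟪u, ν c⟫ : ℝ) ∂(ρ (cls j)) :=
      integral_pi_eval (fun j' => ρ (cls j')) j _ hgm
    rw [h1, integral_sub ?_ (integrable_const _), integral_const,
      integral_inner (hm_int (cls j)) u]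
    · simp [hνdef]
    · refine integrable_of_bound_vec _
        ((Measurable.inner measurable_const hm_sm.measurable)).aestronglyMeasurable 1 fun x => ?_
      rw [Real.norm_eq_abs]
      calc |⟪u, m x⟫| ≤ ‖u‖ * ‖m x‖ := abs_real_inner_le_norm _ _
        _ ≤ 1 := by rw [hu, one_mul]; exact hm_norm x
  rw [hT3] at hJ2
  -- lower bound of the inner risk
  have hlseT2int : Integrable (fun xs => lseAux (T2 xs)) (Measure.pi fun j => ρ (cls j)) := by
    refine integrable_of_bound_vec _
      ((continuous_lseAux.measurable.comp hT2meas).aestronglyMeasurable)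
      (lseAux fun _ : Fin K => (2:ℝ)) fun xs => ?_
    rw [Real.norm_eq_abs, abs_of_nonneg (lseAux_nonneg _)]
    have := lseAux_le (s := T2 xs) (t := fun _ => (2:ℝ)) (δ := 0) le_rfl
      (fun j => by
        have h9 := (abs_le.1 (hT2bd xs j)).2
        show T2 xs j ≤ 2 + 0
        linarith)
    simpa using this
  have hΦ2sm : StronglyMeasurable (fun xs : Fin K → X =>
      ∫ a', ∫ as, infoNCE f K (A a xb) (A a' xb) (fun j => A (as j) (xs j))
        ∂(Measure.pi fun _ : Fin K => PA) ∂PA) := hΦsm.integral_prod_right'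
  have hΦ2int : Integrable (fun xs : Fin K → X =>
      ∫ a', ∫ as, infoNCE f K (A a xb) (A a' xb) (fun j => A (as j) (xs j))
        ∂(Measure.pi fun _ : Fin K => PA) ∂PA) (Measure.pi fun j => ρ (cls j)) := by
    refine integrable_of_bound_vec _ hΦ2sm.aestronglyMeasurable BL fun xs => ?_
    rw [Real.norm_eq_abs, ← Real.norm_eq_abs]
    calc ‖∫ a', ∫ as, infoNCE f K (A a xb) (A a' xb) (fun j => A (as j) (xs j))
          ∂(Measure.pi fun _ : Fin K => PA) ∂PA‖
        ≤ BL * (PA Set.univ).toReal :=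
          norm_integral_le_of_norm_le_const (Filter.Eventually.of_forall fun a' => by
            rw [Real.norm_eq_abs]; exact hΦbd (xs, a'))
      _ = BL := by simp
  have hIRdef : innerRisk ρ PA A f K c xb a k i
      = ∫ xs, (∫ a', ∫ as, infoNCE f K (A a xb) (A a' xb) (fun j => A (as j) (xs j))
          ∂(Measure.pi fun _ : Fin K => PA) ∂PA) ∂(Measure.pi fun j => ρ (cls j)) := rfl
  have hIR : lseAux (fun j : Fin K => (⟪u, ν (cls j)⟫ - ⟪u, ν c⟫ : ℝ))
      - (2 * ‖uh - u‖ + ∫ a', ψ a' ∂PA) ≤ innerRisk ρ PA A f K c xb a k i := by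
    have h3 : Integrable (fun xs : Fin K → X =>
        lseAux (T2 xs) - (2 * ‖uh - u‖ + ∫ a', ψ a' ∂PA)) (Measure.pi fun j => ρ (cls j)) :=
      hlseT2int.sub (integrable_const _)
    have h4 := integral_mono h3 hΦ2int hxs
    have h5 : ∫ xs, (lseAux (T2 xs) - (2 * ‖uh - u‖ + ∫ a', ψ a' ∂PA))
          ∂(Measure.pi fun j => ρ (cls j))
        = (∫ xs, lseAux (T2 xs) ∂(Measure.pi fun j => ρ (cls j)))
          - (2 * ‖uh - u‖ + ∫ a', ψ a' ∂PA) := by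
      rw [integral_sub hlseT2int (integrable_const _), integral_const]; simp
    rw [h5] at h4
    rw [hIRdef]
    linarith
  -- comparison with the supervised target
  set T4 := fun j : Fin K => if h : (j : ℕ) < k then
      (-⟪u, meanRep ρ f c - meanRep ρ f (i ⟨j, h⟩)⟫ : ℝ) else 0 with hT4
  have hESc_nonneg : 0 ≤ ESc := by
    rw [hESc]; exact integral_nonneg fun x => hs2_nonneg x
  have hMX_nonneg : 0 ≤ MX := by
    rw [hMX]; exact Real.iSup_nonneg fun mm => integral_nonneg fun x => hs2_nonneg x
  have hstep5 : lseAux T4 ≤ lseAux (fun j : Fin K => (⟪u, ν (cls j)⟫ - ⟪u, ν c⟫ : ℝ))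
      + (ESc + MX) := by
    refine lseAux_le (add_nonneg hESc_nonneg hMX_nonneg) fun j => ?_
    by_cases hj : (j : ℕ) < k
    · have hclsj : cls j = i ⟨j, hj⟩ := by rw [hcls]; exact dif_pos hj
      simp only [hT4, dif_pos hj, hclsj]
      have h1 : |⟪u, ν c - meanRep ρ f c⟫| ≤ ESc := by
        have ha := abs_real_inner_le_norm u (ν c - meanRep ρ f c)
        rw [hu, one_mul] at ha
        exact ha.trans ((hνμ c hsupc).trans (le_of_eq hESc.symm))
      have h2 : |⟪u, ν (i ⟨j, hj⟩) - meanRep ρ f (i ⟨j, hj⟩)⟫| ≤ MX := by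
        have ha := abs_real_inner_le_norm u (ν (i ⟨j, hj⟩) - meanRep ρ f (i ⟨j, hj⟩))
        rw [hu, one_mul] at ha
        have hb := hνμ (i ⟨j, hj⟩) (hsupi ⟨j, hj⟩)
        have hcle : (∫ x, s2 x ∂(ρ (i ⟨j, hj⟩))) ≤ MX := by
          have hle := le_ciSup (f := fun mm : Fin k => ∫ x, s2 x ∂(ρ (i mm)))
            (Set.Finite.bddAbove (Set.finite_range _)) (⟨j, hj⟩ : Fin k)
          rw [hMX]
          exact hle
        linarith
      have hkey : (-⟪u, meanRep ρ f c - meanRep ρ f (i ⟨j, hj⟩)⟫ : ℝ)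
          - (⟪u, ν (i ⟨j, hj⟩)⟫ - ⟪u, ν c⟫)
          = ⟪u, ν c - meanRep ρ f c⟫ - ⟪u, ν (i ⟨j, hj⟩) - meanRep ρ f (i ⟨j, hj⟩)⟫ := by
        simp only [inner_sub_right]; ring
      have h3 := (abs_le.1 h1).2
      have h4 := (abs_le.1 h2).1
      linarith
    · have hclsj : cls j = c := by rw [hcls]; exact dif_neg hj
      simp only [hT4, dif_neg hj, hclsj, sub_self]
      linarith
  -- identification with r_k^sup
  have hstep6 : lseAux T4 = rkSup ρ f K c u k i := by
    have hsum : ∑ j : Fin K, Real.exp (T4 j)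
        = ((K - k : ℕ) : ℝ)
          + ∑ mm : Fin k, Real.exp (-⟪u, meanRep ρ f c - meanRep ρ f (i mm)⟫) := by
      set gg : ℕ → ℝ := fun n => if h : n < k then
          Real.exp (-⟪u, meanRep ρ f c - meanRep ρ f (i ⟨n, h⟩)⟫) else 1 with hgg
      have h1a : ∑ j : Fin K, Real.exp (T4 j) = ∑ j : Fin K, gg (j : ℕ) := by
        refine Finset.sum_congr rfl fun j _ => ?_
        by_cases hj : (j : ℕ) < k
        · simp only [hT4, hgg, dif_pos hj]
        · simp only [hT4, hgg, dif_neg hj, Real.exp_zero]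
      have h1 : ∑ j : Fin K, Real.exp (T4 j) = ∑ n ∈ Finset.range K, gg n :=
        h1a.trans (Fin.sum_univ_eq_sum_range gg K)
      have h2 : ∑ n ∈ Finset.range k, gg n + ∑ n ∈ Finset.Ico k K, gg n
          = ∑ n ∈ Finset.range K, gg n := by
        rw [Finset.range_eq_Ico, Finset.range_eq_Ico]
        exact Finset.sum_Ico_consecutive _ (Nat.zero_le k) hk
      have h3b : ∑ mm : Fin k, gg (mm : ℕ)
          = ∑ mm : Fin k, Real.exp (-⟪u, meanRep ρ f c - meanRep ρ f (i mm)⟫) := by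
        refine Finset.sum_congr rfl fun mm _ => ?_
        simp only [hgg, dif_pos mm.isLt, Fin.eta]
      have h3 : ∑ n ∈ Finset.range k, gg n
          = ∑ mm : Fin k, Real.exp (-⟪u, meanRep ρ f c - meanRep ρ f (i mm)⟫) :=
        (Fin.sum_univ_eq_sum_range gg k).symm.trans h3b
      have h4 : ∑ n ∈ Finset.Ico k K, gg n = ((K - k : ℕ) : ℝ) := by
        have h5 : ∀ n ∈ Finset.Ico k K, gg n = 1 := fun n hn => by
          simp only [hgg]
          exact dif_neg (by have := (Finset.mem_Ico.1 hn).1; omega)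
        rw [Finset.sum_congr rfl h5, Finset.sum_const, Nat.card_Ico, nsmul_eq_mul, mul_one]
      rw [h1, ← h2, h3, h4]
      ring
    show Real.log (1 + ∑ j, Real.exp (T4 j)) = _
    rw [hsum, rkSup, ← add_assoc]
  -- final assembly
  rw [ge_iff_le]
  have hgoal : rkSup ρ f K c u k i = rkSup ρ f K c (f xb) k i := by rw [hu_def]
  rw [← hgoal]
  linarith [hIR, hstep5, hstep6, hψle]


end
end

section
/- Let f : 𝒳 → ℝ^d be an encoder with ‖f(x)‖ = 1 for all x ∈ 𝒳 satisfying the centered representation property E_{a~P_A} f(a(x̄)) = f(x̄) for all x̄ ∈ 𝒳. Fix c ∈ [C], x̄ ∈ 𝒳, a ∈ 𝒜, k ∈ {0,…,K} and i_1,…,i_k ∈ [C]\{c}. Then r_k(i_1,…,i_k) ≥ log(1 + (K−k) + Σ_{m=1}^k exp(−f(a(x̄))ᵀ(μ_c − μ_{i_m}))) − [ E_{x̄'~ρ_c} E_{a'~P_A} inf_{a''∈𝒜} ‖f(a'(x̄)) − f(a''(x̄'))‖ + E_{x̄'~ρ_c} sup_{a',a''∈𝒜} ‖f(a''(x̄'))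 − f(a'(x̄'))‖ ]. -/
open MeasureTheory Real
open scoped BigOperators RealInnerProductSpace

noncomputable section

variable {X : Type*} [MeasurableSpace X] {Ω : Type*} [MeasurableSpace Ω] {d C : ℕ}

/-! ### Auxiliary lemmas -/

/-- Tangent-plane inequality for log-sum-exp. -/
lemma lse_tangent {K : ℕ} (w z : Fin K → ℝ) :
    Real.log (1 + ∑ j, Real.exp (w j)) +
      ∑ j, (Real.exp (w j) / (1 + ∑ l, Real.exp (w l))) * (z j - w j) ≤
    Real.log (1 + ∑ j, Real.exp (z j)) := by
  set S : ℝ := 1 + ∑ l, Real.exp (w l) with hSdef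
  have hS : 0 < S := by positivity
  set t : ℝ := ∑ j, (Real.exp (w j) / S) * (z j - w j) with htdef
  have key : S * Real.exp t ≤ 1 + ∑ j, Real.exp (z j) := by
    have hconv := convexOn_exp.map_sum_le (t := (Finset.univ : Finset (Option (Fin K))))
      (w := fun o => o.elim (1 / S) (fun j => Real.exp (w j) / S))
      (p := fun o => o.elim 0 (fun j => z j - w j))
      (by rintro (_|j) _ <;> simp only [Option.elim] <;> positivity)
      (by
        rw [Fintype.sum_option]
        simp only [Option.elim]
        rw [← Finset.sum_div, ← add_div, div_eq_one_iff_eq hS.ne'])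
      (by intro o _; trivial)
    rw [Fintype.sum_option, Fintype.sum_option] at hconv
    simp only [Option.elim, smul_eq_mul, mul_zero, zero_add, Real.exp_zero, mul_one] at hconv
    rw [← htdef] at hconv
    calc S * Real.exp t ≤ S * (1 / S + ∑ j, Real.exp (w j) / S * Real.exp (z j - w j)) := by
          apply mul_le_mul_of_nonneg_left hconv hS.le
      _ = 1 + ∑ j, Real.exp (w j) * Real.exp (z j - w j) := by
          rw [mul_add, mul_one_div, div_self hS.ne', Finset.mul_sum]
          congr 1; apply Finset.sum_congr rfl; intro j _; field_simp
      _ = 1 + ∑ j, Real.exp (z j) := by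
          congr 1; apply Finset.sum_congr rfl; intro j _
          rw [← Real.exp_add]; ring_nf
  have h1 : Real.log S + t = Real.log (S * Real.exp t) := by
    rw [Real.log_mul hS.ne' (Real.exp_pos t).ne', Real.log_exp]
  rw [h1]
  exact Real.log_le_log (by positivity) key

lemma integrable_of_bdd {α : Type*} [MeasurableSpace α] {μ : Measure α} [IsFiniteMeasure μ]
    {F : Type*} [NormedAddCommGroup F] {g : α → F}
    (hm : AEStronglyMeasurable g μ) {B : ℝ} (hb : ∀ x, ‖g x‖ ≤ B) : Integrable g μ :=
  ⟨hm, HasFiniteIntegral.of_bounded (ae_of_all _ hb)⟩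

lemma pi_map_eval {ι : Type*} [Fintype ι] [DecidableEq ι] {α : Type*} [MeasurableSpace α]
    (μ : ι → Measure α) [∀ j, IsProbabilityMeasure (μ j)] (j : ι) :
    (Measure.pi μ).map (Function.eval j) = μ j := by
  refine Measure.ext fun s hs => ?_
  rw [Measure.map_apply (measurable_pi_apply j) hs, Set.eval_preimage, Measure.pi_pi]
  rw [Finset.prod_eq_single j (fun b _ hb => by simp [Function.update_of_ne hb]) (by simp)]
  simp

lemma integral_eval_pi {ι : Type*} [Fintype ι] [DecidableEq ι] {α : Type*} [MeasurableSpace α]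
    (μ : ι → Measure α) [∀ j, IsProbabilityMeasure (μ j)] (j : ι)
    {F : Type*} [NormedAddCommGroup F] [NormedSpace ℝ F] (g : α → F)
    (hg : AEStronglyMeasurable g (μ j)) :
    ∫ x : ι → α, g (x j) ∂(Measure.pi μ) = ∫ y, g y ∂(μ j) := by
  rw [← integral_map (measurable_pi_apply j).aemeasurable (by rwa [pi_map_eval]),
    pi_map_eval]

lemma infoNCE_nonneg {f : X → EuclideanSpace ℝ (Fin d)} {K : ℕ} (x x' : X) (xs : Fin K → X) :
    0 ≤ infoNCE f K x x' xs :=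
  Real.log_nonneg (le_add_of_nonneg_right (Finset.sum_nonneg fun _ _ => (Real.exp_pos _).le))

lemma infoNCE_bdd {f : X → EuclideanSpace ℝ (Fin d)} (hf : ∀ x, ‖f x‖ = 1) {K : ℕ}
    (x x' : X) (xs : Fin K → X) :
    ‖infoNCE f K x x' xs‖ ≤ Real.log (1 + K * Real.exp 2) := by
  have hz : ∀ j : Fin K, -⟪f x, f x' - f (xs j)⟫ ≤ 2 := by
    intro j
    have h1 : |⟪f x, f x' - f (xs j)⟫| ≤ ‖f x‖ * ‖f x' - f (xs j)‖ :=
      abs_real_inner_le_norm _ _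
    have hn : ‖f x' - f (xs j)‖ ≤ 2 := (norm_sub_le _ _).trans (by rw [hf, hf]; norm_num)
    rw [hf] at h1
    have := (abs_le.mp (h1.trans (by simpa using hn))).1
    linarith
  rw [Real.norm_eq_abs, abs_of_nonneg (infoNCE_nonneg x x' xs), infoNCE]
  apply Real.log_le_log (by positivity)
  have hsum : ∑ j : Fin K, Real.exp (-⟪f x, f x' - f (xs j)⟫) ≤ ∑ _j : Fin K, Real.exp 2 :=
    Finset.sum_le_sum fun j _ => Real.exp_le_exp.mpr (hz j)
  simp only [Finset.sum_const, Finset.card_univ, Fintype.card_fin, nsmul_eq_mul] at hsum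
  linarith

lemma integral_affine_sum {α : Type*} [MeasurableSpace α] {μ : Measure α}
    [IsProbabilityMeasure μ] {K : ℕ} (T : ℝ) (p w : Fin K → ℝ) (g : Fin K → α → ℝ)
    (b : α → ℝ) (G : Fin K → ℝ) (bI : ℝ)
    (hg : ∀ j, Integrable (g j) μ) (hb : Integrable b μ)
    (hG : ∀ j, ∫ x, g j x ∂μ = G j) (hbI : ∫ x, b x ∂μ = bI) :
    ∫ x, (T + ∑ j, p j * ((g j x - b x) - w j)) ∂μ =
      T + ∑ j, p j * ((G j - bI) - w j) := by
  have he : ∀ j : Fin K, Integrable (fun x => (g j x - b x) - w j) μ := fun j =>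
    ((hg j).sub hb).sub (integrable_const _)
  rw [integral_add (integrable_const _)
      (integrable_finset_sum _ fun j _ => (he j).const_mul _), integral_const]
  simp only [probReal_univ, one_smul]
  congr 1
  rw [integral_finset_sum _ (fun j _ => (he j).const_mul _)]
  refine Finset.sum_congr rfl fun j _ => ?_
  rw [integral_const_mul]
  congr 1
  have hgb : Integrable (fun x => g j x - b x) μ := (hg j).sub hb
  rw [integral_sub hgb (integrable_const (w j)), integral_sub (hg j) hb, integral_const,
    hG j, hbI]
  simp

/-- **Theorem 8 (Improved bound of the inner risk).**
For `‖f(·)‖ = 1` with centered representations `E_{a~P_A} f(a(x̄)) = f(x̄)`, for every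
fixed anchor class `c`, image `x̄`, augmentation `a`, `k ≤ K` and classes
`i_1,…,i_k ≠ c`,
`r_k(i_1,…,i_k) ≥ log(1 + (K−k) + Σ_m exp(−f(a(x̄))ᵀ(μ_c − μ_{i_m})))
  − [E_{x̄'~ρ_c} E_{a'} inf_{a''}‖f(a'(x̄)) − f(a''(x̄'))‖
     + E_{x̄'~ρ_c} sup_{a',a''}‖f(a''(x̄')) − f(a'(x̄'))‖]`. -/
theorem inner_risk_bound_improved
    (K : ℕ) (hC : 1 ≤ C) (hK : 1 ≤ K)
    (pr : Fin C → ℝ) (hpr : ∀ c, 0 ≤ pr c) (hpr1 : ∑ c, pr c = 1)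
    (ρ : Fin C → Measure X) [∀ c, IsProbabilityMeasure (ρ c)]
    (PA : Measure Ω) [IsProbabilityMeasure PA]
    (A : Ω → X → X) (hA : Measurable fun p : Ω × X => A p.1 p.2)
    (f : X → EuclideanSpace ℝ (Fin d)) (hfm : Measurable f)
    (hf : ∀ x, ‖f x‖ = 1)
    (hcent : ∀ xb : X, (∫ a, f (A a xb) ∂PA) = f xb)
    (c : Fin C) (xb : X) (a : Ω)
    (k : ℕ) (hk : k ≤ K) (i : Fin k → Fin C) (hi : ∀ m, i m ≠ c)
    (hsupc : Integrable
      (fun xb' => ⨆ p : Ω × Ω, ‖f (A p.1 xb') - f (A p.2 xb')‖) (ρ c))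
    (hinf1 : ∀ xb' : X,
      Integrable (fun a' => ⨅ a'' : Ω, ‖f (A a' xb) - f (A a'' xb')‖) PA)
    (hinf2 : Integrable
      (fun xb' => ∫ a', (⨅ a'' : Ω, ‖f (A a' xb) - f (A a'' xb')‖) ∂PA) (ρ c)) :
    innerRisk ρ PA A f K c xb a k i ≥
      rkSup ρ f K c (f (A a xb)) k i -
        ((∫ xb', ∫ a', (⨅ a'' : Ω, ‖f (A a' xb) - f (A a'' xb')‖) ∂PA ∂(ρ c)) +
          ∫ xb', (⨆ p : Ω × Ω, ‖f (A p.1 xb') - f (A p.2 xb')‖) ∂(ρ c)) := by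
  classical
  -- abbreviations
  set u : EuclideanSpace ℝ (Fin d) := f (A a xb) with hu
  set cls : Fin K → Fin C := fun j => if h : (j : ℕ) < k then i ⟨j, h⟩ else c with hcls
  set w : Fin K → ℝ := fun j => -⟪u, meanRep ρ f c - meanRep ρ f (cls j)⟫ with hw
  set S : ℝ := 1 + ∑ l, Real.exp (w l) with hS
  set p : Fin K → ℝ := fun j => Real.exp (w j) / S with hp
  have hSpos : 0 < S := by rw [hS]; positivity
  have hnormu : ‖u‖ = 1 := hf _
  -- basic integrability / measurability facts
  have hfa : ∀ y : X, Measurable fun b : Ω => f (A b y) := fun y =>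
    hfm.comp (hA.comp (measurable_id.prodMk measurable_const))
  have hintfa : ∀ y : X, Integrable (fun b : Ω => f (A b y)) PA := fun y =>
    integrable_of_bdd (hfa y).aestronglyMeasurable (B := 1) (fun b => (hf _).le)
  have hinner_cent : ∀ (v : EuclideanSpace ℝ (Fin d)) (y : X),
      ∫ b, ⟪v, f (A b y)⟫ ∂PA = ⟪v, f y⟫ := fun v y => by
    rw [integral_inner (hintfa y) v, hcent y]
  -- `log S` equals `rkSup`
  have hT : Real.log S = rkSup ρ f K c u k i := by
    set g : ℕ → ℝ := fun n => if hn : n < k then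
        Real.exp (-⟪u, meanRep ρ f c - meanRep ρ f (i ⟨n, hn⟩)⟫) else 1 with hg
    have h1 : ∑ j : Fin K, Real.exp (w j) = ∑ n ∈ Finset.range K, g n := by
      rw [← Fin.sum_univ_eq_sum_range g K]
      refine Finset.sum_congr rfl fun j _ => ?_
      by_cases hj : (j : ℕ) < k
      · simp only [hg, hw, hcls, dif_pos hj]
      · simp only [hg, hw, hcls, dif_neg hj]
        simp
    have h2 : ∑ n ∈ Finset.Ico k K, g n = ((K - k : ℕ) : ℝ) := by
      rw [Finset.sum_congr rfl
        (fun n hn => show g n = 1 by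
          simp only [hg]; exact dif_neg (not_lt.mpr (Finset.mem_Ico.mp hn).1)),
        Finset.sum_const, Nat.card_Ico, nsmul_eq_mul, mul_one]
    have h3 : ∑ n ∈ Finset.range k, g n =
        ∑ m : Fin k, Real.exp (-⟪u, meanRep ρ f c - meanRep ρ f (i m)⟫) := by
      rw [← Fin.sum_univ_eq_sum_range g k]
      refine Finset.sum_congr rfl fun m _ => ?_
      simp only [hg, dif_pos m.isLt, Fin.eta]
    rw [rkSup, hS, h1, ← Finset.sum_range_add_sum_Ico g hk, h2, h3]
    congr 1
    ring
  -- weights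
  have hp0 : ∀ j, 0 ≤ p j := fun j => by
    rw [hp]; positivity
  have hpsum0 : 0 ≤ ∑ j, p j := Finset.sum_nonneg fun j _ => hp0 j
  have hpsum1 : ∑ j, p j ≤ 1 := by
    rw [hp, ← Finset.sum_div, div_le_one hSpos, hS]
    have : 0 ≤ (1:ℝ) := zero_le_one
    linarith
  -- Step C : main Jensen-type lower bound of the triple integral
  have stepC : Real.log S + ∑ j, p j * ((⟪u, meanRep ρ f (cls j)⟫ - ⟪u, f xb⟫) - w j) ≤
      innerRisk ρ PA A f K c xb a k i := by
    set PiPA : Measure (Fin K → Ω) := Measure.pi fun _ : Fin K => PA with hPiPA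
    set Piρ : Measure (Fin K → X) := Measure.pi fun j : Fin K => ρ (cls j) with hPiρ
    haveI : IsProbabilityMeasure PiPA := by rw [hPiPA]; infer_instance
    haveI : IsProbabilityMeasure Piρ := by rw [hPiρ]; infer_instance
    have hirw : innerRisk ρ PA A f K c xb a k i =
        ∫ xs, ∫ a', ∫ as, infoNCE f K (A a xb) (A a' xb) (fun j => A (as j) (xs j))
          ∂PiPA ∂PA ∂Piρ := by
      rw [hPiPA, hPiρ, hcls]; rfl
    set B : ℝ := Real.log (1 + K * Real.exp 2) with hB
    -- measurability of the joint integrand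
    have hm3 : Measurable fun q : ((Fin K → X) × Ω) × (Fin K → Ω) =>
        infoNCE f K (A a xb) (A q.1.2 xb) (fun j => A (q.2 j) (q.1.1 j)) := by
      have hx : ∀ j : Fin K, Measurable fun q : ((Fin K → X) × Ω) × (Fin K → Ω) =>
          f (A (q.2 j) (q.1.1 j)) := by
        intro j
        have h1 : Measurable fun q : ((Fin K → X) × Ω) × (Fin K → Ω) =>
            ((q.2 j, q.1.1 j) : Ω × X) :=
          ((measurable_pi_apply j).comp measurable_snd).prodMk
            ((measurable_pi_apply j).comp (measurable_fst.comp measurable_fst))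
        exact hfm.comp (hA.comp h1)
      have hy : Measurable fun q : ((Fin K → X) × Ω) × (Fin K → Ω) => f (A q.1.2 xb) := by
        have h1 : Measurable fun q : ((Fin K → X) × Ω) × (Fin K → Ω) =>
            ((q.1.2, xb) : Ω × X) :=
          (measurable_snd.comp measurable_fst).prodMk measurable_const
        exact hfm.comp (hA.comp h1)
      unfold infoNCE
      exact (measurable_const.add (Finset.measurable_sum Finset.univ fun j _ =>
        ((Measurable.inner measurable_const (hy.sub (hx j))).neg.exp))).log
    have SM2 : StronglyMeasurable fun q : (Fin K → X) × Ω =>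
        ∫ as, infoNCE f K (A a xb) (A q.2 xb) (fun j => A (as j) (q.1 j)) ∂PiPA :=
      hm3.stronglyMeasurable.integral_prod_right'
    have SM1 : StronglyMeasurable fun xs : Fin K → X =>
        ∫ a', ∫ as, infoNCE f K (A a xb) (A a' xb) (fun j => A (as j) (xs j)) ∂PiPA ∂PA :=
      SM2.integral_prod_right'
    -- bounds
    have hb3 : ∀ (xs : Fin K → X) (a' : Ω) (as : Fin K → Ω),
        ‖infoNCE f K (A a xb) (A a' xb) (fun j => A (as j) (xs j))‖ ≤ B :=
      fun _ _ _ => infoNCE_bdd hf _ _ _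
    have hb2 : ∀ (xs : Fin K → X) (a' : Ω),
        ‖∫ as, infoNCE f K (A a xb) (A a' xb) (fun j => A (as j) (xs j)) ∂PiPA‖ ≤ B :=
      fun xs a' => (norm_integral_le_of_norm_le_const
        (ae_of_all _ fun as => hb3 xs a' as)).trans (by simp)
    have hb1 : ∀ xs : Fin K → X,
        ‖∫ a', ∫ as, infoNCE f K (A a xb) (A a' xb) (fun j => A (as j) (xs j)) ∂PiPA ∂PA‖
          ≤ B := fun xs => (norm_integral_le_of_norm_le_const
        (ae_of_all _ fun a' => hb2 xs a')).trans (by simp)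
    -- integrability at the three levels
    have hint3 : ∀ (xs : Fin K → X) (a' : Ω), Integrable
        (fun as => infoNCE f K (A a xb) (A a' xb) (fun j => A (as j) (xs j))) PiPA :=
      fun xs a' => integrable_of_bdd
        ((hm3.comp (measurable_prodMk_left (x := (xs, a')))).aestronglyMeasurable)
        (hb3 xs a')
    have hint2 : ∀ xs : Fin K → X, Integrable
        (fun a' => ∫ as, infoNCE f K (A a xb) (A a' xb) (fun j => A (as j) (xs j)) ∂PiPA)
        PA := fun xs => integrable_of_bdd
        ((SM2.comp_measurable (measurable_prodMk_left (x := xs))).aestronglyMeasurable)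
        (fun a' => hb2 xs a')
    have hint1 : Integrable (fun xs =>
        ∫ a', ∫ as, infoNCE f K (A a xb) (A a' xb) (fun j => A (as j) (xs j)) ∂PiPA ∂PA)
        Piρ := integrable_of_bdd SM1.aestronglyMeasurable hb1
    -- inner product integrands
    have hinner_bdd : ∀ v : EuclideanSpace ℝ (Fin d), ‖v‖ = 1 → ∀ y : X, ‖⟪u, v⟫‖ ≤ 1 := by
      intro v hv y
      rw [Real.norm_eq_abs]
      have := abs_real_inner_le_norm u v
      rwa [hnormu, hv, one_mul] at this
    have hp' : ∀ j, Real.exp (w j) / S = p j := fun j => by rw [hp]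
    -- Step A
    have stepA : ∀ (xs : Fin K → X) (a' : Ω),
        Real.log S + ∑ j, p j * ((⟪u, f (xs j)⟫ - ⟪u, f (A a' xb)⟫) - w j) ≤
          ∫ as, infoNCE f K (A a xb) (A a' xb) (fun j => A (as j) (xs j)) ∂PiPA := by
      intro xs a'
      have hpt : ∀ as : Fin K → Ω,
          Real.log S + ∑ j, p j * ((⟪u, f (A (as j) (xs j))⟫ - ⟪u, f (A a' xb)⟫) - w j) ≤
            infoNCE f K (A a xb) (A a' xb) (fun j => A (as j) (xs j)) := by
        intro as
        have h := lse_tangent w (fun j => -⟪u, f (A a' xb) - f (A (as j) (xs j))⟫)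
        rw [← hS] at h
        simp only [hp', inner_sub_right, neg_sub] at h
        rw [infoNCE]
        simp only [← hu, inner_sub_right, neg_sub]
        exact h
      have hmj : ∀ j : Fin K, Measurable fun as : Fin K → Ω => ⟪u, f (A (as j) (xs j))⟫ := by
        intro j
        have h1 : Measurable fun as : Fin K → Ω => ((as j, xs j) : Ω × X) :=
          (measurable_pi_apply j).prodMk measurable_const
        exact Measurable.inner measurable_const (hfm.comp (hA.comp h1))
      have hij : ∀ j : Fin K,
          Integrable (fun as : Fin K → Ω => ⟪u, f (A (as j) (xs j))⟫) PiPA := fun j =>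
        integrable_of_bdd (hmj j).aestronglyMeasurable (B := 1)
          (fun as => hinner_bdd _ (hf _) xb)
      have hcomp : ∫ as, (Real.log S +
            ∑ j, p j * ((⟪u, f (A (as j) (xs j))⟫ - ⟪u, f (A a' xb)⟫) - w j)) ∂PiPA =
          Real.log S + ∑ j, p j * ((⟪u, f (xs j)⟫ - ⟪u, f (A a' xb)⟫) - w j) := by
        have hG : ∀ j : Fin K, ∫ as : Fin K → Ω, ⟪u, f (A (as j) (xs j))⟫ ∂PiPA =
            ⟪u, f (xs j)⟫ := by
          intro j
          rw [hPiPA, integral_eval_pi (fun _ : Fin K => PA) j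
            (fun b => ⟪u, f (A b (xs j))⟫)
            (Measurable.inner measurable_const (hfa (xs j))).aestronglyMeasurable]
          exact hinner_cent u (xs j)
        have hbI : ∫ _as : Fin K → Ω, ⟪u, f (A a' xb)⟫ ∂PiPA = ⟪u, f (A a' xb)⟫ := by
          simp
        exact integral_affine_sum (μ := PiPA) (Real.log S) p w
          (fun j as => ⟪u, f (A (as j) (xs j))⟫) (fun _ => ⟪u, f (A a' xb)⟫)
          (fun j => ⟪u, f (xs j)⟫) ⟪u, f (A a' xb)⟫ hij (integrable_const _) hG hbI
      calc Real.log S + ∑ j, p j * ((⟪u, f (xs j)⟫ - ⟪u, f (A a' xb)⟫) - w j)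
          = ∫ as, (Real.log S +
            ∑ j, p j * ((⟪u, f (A (as j) (xs j))⟫ - ⟪u, f (A a' xb)⟫) - w j)) ∂PiPA :=
            hcomp.symm
        _ ≤ _ := integral_mono ((integrable_const _).add
            (integrable_finset_sum _ fun j _ =>
              ((((hij j).sub (integrable_const _)).sub (integrable_const _)).const_mul _)))
            (hint3 xs a') hpt
    -- Step B
    have stepB : ∀ xs : Fin K → X,
        Real.log S + ∑ j, p j * ((⟪u, f (xs j)⟫ - ⟪u, f xb⟫) - w j) ≤
          ∫ a', ∫ as, infoNCE f K (A a xb) (A a' xb) (fun j => A (as j) (xs j)) ∂PiPA ∂PA := by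
      intro xs
      have hib : Integrable (fun a' : Ω => ⟪u, f (A a' xb)⟫) PA :=
        integrable_of_bdd (Measurable.inner measurable_const (hfa xb)).aestronglyMeasurable
          (B := 1) (fun a' => hinner_bdd _ (hf _) xb)
      have hcomp : ∫ a', (Real.log S +
            ∑ j, p j * ((⟪u, f (xs j)⟫ - ⟪u, f (A a' xb)⟫) - w j)) ∂PA =
          Real.log S + ∑ j, p j * ((⟪u, f (xs j)⟫ - ⟪u, f xb⟫) - w j) := by
        have hG : ∀ j : Fin K, ∫ _a' : Ω, ⟪u, f (xs j)⟫ ∂PA = ⟪u, f (xs j)⟫ :=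
          fun j => by simp
        have hbI : ∫ a', ⟪u, f (A a' xb)⟫ ∂PA = ⟪u, f xb⟫ := hinner_cent u xb
        exact integral_affine_sum (μ := PA) (Real.log S) p w
          (fun j _ => ⟪u, f (xs j)⟫) (fun a' => ⟪u, f (A a' xb)⟫)
          (fun j => ⟪u, f (xs j)⟫) ⟪u, f xb⟫ (fun j => integrable_const _) hib hG hbI
      calc Real.log S + ∑ j, p j * ((⟪u, f (xs j)⟫ - ⟪u, f xb⟫) - w j)
          = ∫ a', (Real.log S +
            ∑ j, p j * ((⟪u, f (xs j)⟫ - ⟪u, f (A a' xb)⟫) - w j)) ∂PA := hcomp.symm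
        _ ≤ _ := integral_mono ((integrable_const _).add
            (integrable_finset_sum _ fun j _ =>
              ((((integrable_const _).sub hib).sub (integrable_const _)).const_mul _)))
            (hint2 xs) (stepA xs)
    -- Step C
    have hibx : ∀ j : Fin K, Integrable (fun xs : Fin K → X => ⟪u, f (xs j)⟫) Piρ :=
      fun j => integrable_of_bdd
        (Measurable.inner measurable_const (hfm.comp (measurable_pi_apply j))).aestronglyMeasurable
        (B := 1) (fun xs => hinner_bdd _ (hf _) xb)
    have hcomp : ∫ xs, (Real.log S +
          ∑ j, p j * ((⟪u, f (xs j)⟫ - ⟪u, f xb⟫) - w j)) ∂Piρ =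
        Real.log S + ∑ j, p j * ((⟪u, meanRep ρ f (cls j)⟫ - ⟪u, f xb⟫) - w j) := by
      have hG : ∀ j : Fin K, ∫ xs : Fin K → X, ⟪u, f (xs j)⟫ ∂Piρ =
          ⟪u, meanRep ρ f (cls j)⟫ := by
        intro j
        rw [hPiρ, integral_eval_pi (fun j : Fin K => ρ (cls j)) j (fun y => ⟪u, f y⟫)
          (Measurable.inner measurable_const hfm).aestronglyMeasurable,
          integral_inner (integrable_of_bdd hfm.aestronglyMeasurable (B := 1)
            (fun x => (hf x).le)) u]
        rfl
      have hbI : ∫ _xs : Fin K → X, ⟪u, f xb⟫ ∂Piρ = ⟪u, f xb⟫ := by simp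
      exact integral_affine_sum (μ := Piρ) (Real.log S) p w
        (fun j xs => ⟪u, f (xs j)⟫) (fun _ => ⟪u, f xb⟫)
        (fun j => ⟪u, meanRep ρ f (cls j)⟫) ⟪u, f xb⟫ hibx (integrable_const _) hG hbI
    rw [hirw]
    calc Real.log S + ∑ j, p j * ((⟪u, meanRep ρ f (cls j)⟫ - ⟪u, f xb⟫) - w j)
        = ∫ xs, (Real.log S +
          ∑ j, p j * ((⟪u, f (xs j)⟫ - ⟪u, f xb⟫) - w j)) ∂Piρ := hcomp.symm
      _ ≤ _ := integral_mono ((integrable_const _).add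
          (integrable_finset_sum _ fun j _ =>
            ((((hibx j).sub (integrable_const _)).sub (integrable_const _)).const_mul _)))
          hint1 stepB
  -- rewrite the lower bound
  have hG0 : Real.log S + ∑ j, p j * ((⟪u, meanRep ρ f (cls j)⟫ - ⟪u, f xb⟫) - w j) =
      Real.log S + (∑ j, p j) * ⟪u, meanRep ρ f c - f xb⟫ := by
    congr 1
    rw [Finset.sum_mul]
    refine Finset.sum_congr rfl fun j _ => ?_
    have hwj : w j = ⟪u, meanRep ρ f (cls j)⟫ - ⟪u, meanRep ρ f c⟫ := by
      rw [hw]; simp [inner_sub_right]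
    rw [hwj, inner_sub_right]
    ring
  -- lower bound the inner product term
  have hDlow : -(‖meanRep ρ f c - f xb‖) ≤ (∑ j, p j) * ⟪u, meanRep ρ f c - f xb⟫ := by
    have h1 : |⟪u, meanRep ρ f c - f xb⟫| ≤ ‖meanRep ρ f c - f xb‖ := by
      have := abs_real_inner_le_norm u (meanRep ρ f c - f xb)
      rwa [hnormu, one_mul] at this
    have h2 := (abs_le.mp h1).1
    have h3 := (abs_le.mp h1).2
    have hnn : 0 ≤ ‖meanRep ρ f c - f xb‖ := norm_nonneg _
    rcases le_or_gt 0 ⟪u, meanRep ρ f c - f xb⟫ with h | h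
    · nlinarith
    · nlinarith
  -- the distance chain
  have hnormchain : ‖meanRep ρ f c - f xb‖ ≤
      (∫ xb', ∫ a', (⨅ a'' : Ω, ‖f (A a' xb) - f (A a'' xb')‖) ∂PA ∂(ρ c)) +
        ∫ xb', (⨆ p : Ω × Ω, ‖f (A p.1 xb') - f (A p.2 xb')‖) ∂(ρ c) := by
    haveI : Nonempty Ω := ⟨a⟩
    have hintf : Integrable f (ρ c) :=
      integrable_of_bdd hfm.aestronglyMeasurable (B := 1) fun x => (hf x).le
    have hsub : ∀ xb' : X, ‖f xb' - f xb‖ ≤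
        (∫ a', (⨅ a'' : Ω, ‖f (A a' xb) - f (A a'' xb')‖) ∂PA) +
          ⨆ p : Ω × Ω, ‖f (A p.1 xb') - f (A p.2 xb')‖ := by
      intro xb'
      have hbdd : BddAbove (Set.range fun p : Ω × Ω => ‖f (A p.1 xb') - f (A p.2 xb')‖) :=
        ⟨2, by rintro _ ⟨q, rfl⟩; exact (norm_sub_le _ _).trans (by rw [hf, hf]; norm_num)⟩
      have hsuple : ∀ a'' : Ω, ‖f (A a'' xb') - f xb'‖ ≤
          ⨆ p : Ω × Ω, ‖f (A p.1 xb') - f (A p.2 xb')‖ := by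
        intro a''
        have heq : f (A a'' xb') - f xb' = ∫ a₃, (f (A a'' xb') - f (A a₃ xb')) ∂PA := by
          rw [integral_sub (integrable_const _) (hintfa xb'), integral_const, hcent]
          simp
        rw [heq]
        refine (norm_integral_le_of_norm_le_const (ae_of_all _ fun a₃ =>
          le_ciSup hbdd ((a'', a₃) : Ω × Ω))).trans ?_
        simp
      have hstep : ∀ a' : Ω, ‖f xb' - f (A a' xb)‖ ≤
          (⨅ a'' : Ω, ‖f (A a' xb) - f (A a'' xb')‖) +
            ⨆ p : Ω × Ω, ‖f (A p.1 xb') - f (A p.2 xb')‖ := by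
        intro a'
        have hile : ‖f xb' - f (A a' xb)‖ - (⨆ p : Ω × Ω, ‖f (A p.1 xb') - f (A p.2 xb')‖) ≤
            ⨅ a'' : Ω, ‖f (A a' xb) - f (A a'' xb')‖ := by
          refine le_ciInf fun a'' => ?_
          have tri : ‖f xb' - f (A a' xb)‖ ≤
              ‖f (A a' xb) - f (A a'' xb')‖ + ‖f (A a'' xb') - f xb'‖ := by
            rw [norm_sub_rev]
            exact norm_sub_le_norm_sub_add_norm_sub _ _ _
          linarith [hsuple a'']
        linarith
      have heq2 : f xb' - f xb = ∫ a', (f xb' - f (A a' xb)) ∂PA := by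
        rw [integral_sub (integrable_const _) (hintfa xb), integral_const, hcent]
        simp
      have hintn : Integrable (fun a' : Ω => ‖f xb' - f (A a' xb)‖) PA :=
        integrable_of_bdd ((measurable_const.sub (hfa xb)).norm).aestronglyMeasurable
          (B := 2) fun a' => by
            rw [norm_norm]
            exact (norm_sub_le _ _).trans (by rw [hf, hf]; norm_num)
      calc ‖f xb' - f xb‖ ≤ ∫ a', ‖f xb' - f (A a' xb)‖ ∂PA := by
            rw [heq2]; exact norm_integral_le_integral_norm _
        _ ≤ ∫ a', ((⨅ a'' : Ω, ‖f (A a' xb) - f (A a'' xb')‖) +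
              ⨆ p : Ω × Ω, ‖f (A p.1 xb') - f (A p.2 xb')‖) ∂PA :=
            integral_mono hintn ((hinf1 xb').add (integrable_const _)) hstep
        _ = _ := by
            rw [integral_add (hinf1 xb') (integrable_const _), integral_const]
            simp
    have heq3 : meanRep ρ f c - f xb = ∫ xb', (f xb' - f xb) ∂(ρ c) := by
      rw [integral_sub hintf (integrable_const _), integral_const]
      simp [meanRep]
    have hintn2 : Integrable (fun xb' : X => ‖f xb' - f xb‖) (ρ c) :=
      integrable_of_bdd ((hfm.sub measurable_const).norm).aestronglyMeasurable
        (B := 2) fun x => by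
          rw [norm_norm]
          exact (norm_sub_le _ _).trans (by rw [hf, hf]; norm_num)
    calc ‖meanRep ρ f c - f xb‖ ≤ ∫ xb', ‖f xb' - f xb‖ ∂(ρ c) := by
          rw [heq3]; exact norm_integral_le_integral_norm _
      _ ≤ ∫ xb', ((∫ a', (⨅ a'' : Ω, ‖f (A a' xb) - f (A a'' xb')‖) ∂PA) +
            ⨆ p : Ω × Ω, ‖f (A p.1 xb') - f (A p.2 xb')‖) ∂(ρ c) :=
          integral_mono hintn2 (hinf2.add hsupc) hsub
      _ = _ := integral_add hinf2 hsupc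
  calc innerRisk ρ PA A f K c xb a k i ≥
      Real.log S + ∑ j, p j * ((⟪u, meanRep ρ f (cls j)⟫ - ⟪u, f xb⟫) - w j) := stepC
    _ = Real.log S + (∑ j, p j) * ⟪u, meanRep ρ f c - f xb⟫ := hG0
    _ ≥ Real.log S - ‖meanRep ρ f c - f xb‖ := by linarith
    _ ≥ rkSup ρ f K c u k i -
        ((∫ xb', ∫ a', (⨅ a'' : Ω, ‖f (A a' xb) - f (A a'' xb')‖) ∂PA ∂(ρ c)) +
          ∫ xb', (⨆ p : Ω × Ω, ‖f (A p.1 xb') - f (A p.2 xb')‖) ∂(ρ c)) := by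
      rw [hT]; linarith

end
end
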